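/- Let f be a newform of weight 2 and level p^n with n ≥ 2, and suppose the p-adic local representation ρ_{f,p} (attached to f at a prime λ ∤ p) is ramified of level i, i.e., all upper-numbering ramification groups above i act trivially. Then n ≤ 2(i+1). -/

import Mathlib

noncomputable section

namespace ArtinConductor

variable {G : Type} [Group G]

/-- The subspace of vectors fixed by the subgroup `S` under the representation `ρ`. -/
def fixedSubmodule (k V : Type) [Field k] [AddCommGroup V] [Module k V]
    (ρ : Representation k G V) (S : Subgroup G) : Submodule k V :=
  Representation.invariants (V := V) (ρ.comp S.subtype : Representation k S V)

/-- The exponent of the Artin conductor of a representation `ρ`, computed from the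
upper-numbering ramification filtration `R` (with inertia `I = R 0`) by
`a(ρ) = dim V − dim V^{I} + ∫₁^∞ dim (V / V^{G^u}) du`. -/
def artinExponent (k V : Type) [Field k] [AddCommGroup V] [Module k V]
    (R : ℝ → Subgroup G) (ρ : Representation k G V) : ℝ :=
  ((Module.finrank k V : ℝ) -
      (Module.finrank k (fixedSubmodule k V ρ (R 0)) : ℝ)) +
    ∫ u in Set.Ioi (1 : ℝ),
      ((Module.finrank k V : ℝ) -
        (Module.finrank k (fixedSubmodule k V ρ (R u)) : ℝ))

end ArtinConductor

open ArtinConductor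

/-- Let `f` be a newform of weight `2` and level `p ^ n` with `n ≥ 2`, and let
`ρ = ρ_{f,p}` be the associated `2`-dimensional local Galois representation at `p` (for a
prime `λ ∤ p`), so that by Carayol's theorem the exponent of its Artin conductor equals `n`.
If `ρ` is ramified of level `i` — i.e. all upper-numbering ramification groups `R u` with
`u > i` act trivially — then `n ≤ 2 (i + 1)`. -/
theorem level_exponent_le_of_ramified_of_level
    (G : Type) [Group G] (R : ℝ → Subgroup G) (hR : Antitone R)
    (k V : Type) [Field k] [AddCommGroup V] [Module k V] [FiniteDimensional k V]
    (hdim : Module.finrank k V = 2)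
    (ρ : Representation k G V)
    (n : ℕ) (hn : 2 ≤ n)
    (hCarayol : artinExponent k V R ρ = n)
    (i : ℝ)
    (hlevel : ∀ u : ℝ, i < u → ∀ g ∈ R u, ∀ x : V, ρ g x = x) :
    (n : ℝ) ≤ 2 * (i + 1) := by
  classical
  set D : ℝ → ℝ := fun u =>
    ((Module.finrank k V : ℝ) -
      (Module.finrank k (fixedSubmodule k V ρ (R u)) : ℝ)) with hD
  -- if the action of R u is trivial, the fixed submodule is everything
  have hfixtop : ∀ u : ℝ, i < u → fixedSubmodule k V ρ (R u) = ⊤ := by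
    intro u hu
    apply eq_top_iff.2
    intro x _
    intro g
    exact hlevel u hu (g : G) g.2 x
  have hDzero : ∀ u : ℝ, i < u → D u = 0 := by
    intro u hu
    simp only [hD]
    rw [hfixtop u hu, finrank_top, sub_self]
  -- bounds on D
  have hDnonneg : ∀ u : ℝ, 0 ≤ D u := by
    intro u
    have := Submodule.finrank_le (fixedSubmodule k V ρ (R u))
    simp only [hD, sub_nonneg]
    exact_mod_cast this
  have hDle : ∀ u : ℝ, D u ≤ 2 := by
    intro u
    have h0 : (0 : ℝ) ≤ (Module.finrank k (fixedSubmodule k V ρ (R u)) : ℝ) := by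
      positivity
    simp only [hD, hdim]
    push_cast
    linarith
  -- D is antitone
  have hDanti : Antitone D := by
    intro u v huv
    have hsub : fixedSubmodule k V ρ (R u) ≤ fixedSubmodule k V ρ (R v) := by
      intro x hx
      intro g
      exact hx ⟨(g : G), hR huv g.2⟩
    have := Submodule.finrank_mono hsub
    simp only [hD]
    have : (Module.finrank k (fixedSubmodule k V ρ (R u)) : ℝ) ≤
        (Module.finrank k (fixedSubmodule k V ρ (R v)) : ℝ) := by exact_mod_cast this
    linarith
  -- first, i must be nonnegative
  have hi0 : 0 ≤ i := by
    by_contra hneg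
    push_neg at hneg
    have h1 : D 0 = 0 := hDzero 0 hneg
    have hInt : ∀ u ∈ Set.Ioi (1 : ℝ), D u = 0 := fun u hu =>
      hDzero u (lt_trans hneg (lt_trans one_pos hu))
    have hIntzero : (∫ u in Set.Ioi (1 : ℝ), D u) = 0 := by
      rw [MeasureTheory.setIntegral_congr_fun measurableSet_Ioi hInt]
      simp
    have : artinExponent k V R ρ = 0 := by
      unfold artinExponent
      rw [show (∫ u in Set.Ioi (1 : ℝ),
          ((Module.finrank k V : ℝ) -
            (Module.finrank k (fixedSubmodule k V ρ (R u)) : ℝ))) =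
          ∫ u in Set.Ioi (1 : ℝ), D u from rfl, hIntzero]
      have := h1
      simp only [hD] at this
      linarith
    rw [hCarayol] at this
    have : n = 0 := by exact_mod_cast this
    omega
  -- bound the integral
  have key : (∫ u in Set.Ioi (1 : ℝ), D u) ≤ 2 * max (i - 1) 0 := by
    rcases le_or_gt i 1 with hle | hlt
    · have hInt : ∀ u ∈ Set.Ioi (1 : ℝ), D u = 0 := fun u hu =>
        hDzero u (lt_of_le_of_lt hle hu)
      rw [MeasureTheory.setIntegral_congr_fun measurableSet_Ioi hInt,
        MeasureTheory.integral_zero]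
      positivity
    · -- i > 1 : split Ioi 1 = Ioc 1 i ∪ Ioi i
      have hmeasD : Measurable D := hDanti.measurable
      have hint1 : MeasureTheory.IntegrableOn D (Set.Ioc (1 : ℝ) i) := by
        apply MeasureTheory.Measure.integrableOn_of_bounded (M := 2)
          measure_Ioc_lt_top.ne hmeasD.aestronglyMeasurable
        refine MeasureTheory.ae_of_all _ fun u => ?_
        rw [Real.norm_eq_abs, abs_le]
        exact ⟨by linarith [hDnonneg u], hDle u⟩
      have hint2 : MeasureTheory.IntegrableOn D (Set.Ioi i) := by
        apply MeasureTheory.IntegrableOn.congr_fun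
          (MeasureTheory.integrableOn_zero) _ measurableSet_Ioi
        intro u hu
        exact (hDzero u hu).symm
      have hunion : Set.Ioi (1 : ℝ) = Set.Ioc 1 i ∪ Set.Ioi i :=
        (Set.Ioc_union_Ioi_eq_Ioi hlt.le).symm
      have hdisj : Disjoint (Set.Ioc (1 : ℝ) i) (Set.Ioi i) :=
        Set.Ioc_disjoint_Ioi le_rfl
      rw [hunion, MeasureTheory.setIntegral_union hdisj measurableSet_Ioi hint1 hint2]
      have hIoi0 : (∫ u in Set.Ioi i, D u) = 0 := by
        rw [MeasureTheory.setIntegral_congr_fun measurableSet_Ioi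
          (fun u hu => hDzero u hu)]
        simp
      rw [hIoi0, add_zero]
      have hbound : (∫ u in Set.Ioc (1 : ℝ) i, D u) ≤
          ∫ _u in Set.Ioc (1 : ℝ) i, (2 : ℝ) := by
        apply MeasureTheory.setIntegral_mono_on hint1
          (MeasureTheory.integrableOn_const measure_Ioc_lt_top.ne)
          measurableSet_Ioc
        intro u _
        exact hDle u
      have hconst : (∫ _u in Set.Ioc (1 : ℝ) i, (2 : ℝ)) = 2 * (i - 1) := by
        rw [MeasureTheory.setIntegral_const]
        rw [Real.volume_real_Ioc_of_le (by linarith), smul_eq_mul]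
        ring
      rw [max_eq_left (by linarith)]
      linarith
  -- assemble
  have hfirst : ((Module.finrank k V : ℝ) -
      (Module.finrank k (fixedSubmodule k V ρ (R 0)) : ℝ)) ≤ 2 := hDle 0
  have hCar : (n : ℝ) = ((Module.finrank k V : ℝ) -
      (Module.finrank k (fixedSubmodule k V ρ (R 0)) : ℝ)) +
      ∫ u in Set.Ioi (1 : ℝ), D u := by
    rw [← hCarayol]; rfl
  rcases le_or_gt i 1 with hle | hlt
  · rw [max_eq_right (by linarith)] at key
    rw [hCar]
    linarith
  · rw [max_eq_left (by linarith)] at key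
    rw [hCar]
    linarith
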